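/- Let n ≥ 2 and L_1 ≥ ⋯ ≥ L_n > 0. If an integer l with 1 ≤ l ≤ n−1 satisfies (n−l−1)L_{l+1} < ∑_{i=1}^l L_i ≤ (n−l+1)L_{l+1}, then 4L_{l+1}(∑_{i=1}^{l} L_i + L_{l+1}) / (∑_{i=1}^{l} L_i + (n−l+1)L_{l+1})² > 1/n, and hence 1 − 4L_{l+1}∑_{i=1}^n L_i / (∑_{i=1}^{l} L_i + (n−l+1)L_{l+1})² < 1 − 1/n. -/

import Mathlib

theorem stmt_17 (n : ℕ) (hn : 2 ≤ n) (L : ℕ → ℝ)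
    (hpos : ∀ i < n, 0 < L i)
    (hdec : ∀ i j, i ≤ j → j < n → L j ≤ L i)
    (l : ℕ) (hl : 1 ≤ l) (hln : l ≤ n - 1)
    (hc1 : ((n : ℝ) - l - 1) * L l < ∑ i ∈ Finset.range l, L i)
    (hc2 : ∑ i ∈ Finset.range l, L i ≤ ((n : ℝ) - l + 1) * L l) :
    1/(n : ℝ) < 4 * L l * ((∑ i ∈ Finset.range l, L i) + L l) /
        ((∑ i ∈ Finset.range l, L i) + ((n : ℝ) - l + 1) * L l)^2 ∧
    1 - 4 * L l * (∑ i ∈ Finset.range n, L i) /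
        ((∑ i ∈ Finset.range l, L i) + ((n : ℝ) - l + 1) * L l)^2 < 1 - 1/(n : ℝ) := by
  have hlnn : l < n := by omega
  have hM : 0 < L l := hpos l hlnn
  have hS : 0 < ∑ i ∈ Finset.range l, L i := by
    apply Finset.sum_pos
    · intro i hi
      exact hpos i (lt_of_lt_of_le (Finset.mem_range.mp hi) hlnn.le)
    · exact ⟨0, Finset.mem_range.mpr hl⟩
  set S := ∑ i ∈ Finset.range l, L i with hSdef
  set M := L l with hMdef
  have hn0 : (0:ℝ) < n := by positivity
  have hl1 : (1:ℝ) ≤ (l:ℝ) := by exact_mod_cast hl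
  have hk : (1:ℝ) ≤ (n:ℝ) - l := by
    have : (l:ℝ) + 1 ≤ (n:ℝ) := by exact_mod_cast hlnn
    linarith
  have hD : 0 < S + ((n:ℝ) - l + 1) * M := by nlinarith
  have h1 : 1/(n:ℝ) < 4 * M * (S + M) / (S + ((n:ℝ) - l + 1) * M)^2 := by
    rw [div_lt_div_iff₀ hn0 (by positivity)]
    nlinarith [mul_nonneg (sub_nonneg.2 hc2) (sub_pos.2 hc1).le,
      mul_pos hM (sub_pos.2 hc1), sq_nonneg M, mul_pos hM hM,
      mul_le_mul_of_nonneg_left hl1 (mul_pos hM hM).le]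
  refine ⟨h1, ?_⟩
  have hT : S + M ≤ ∑ i ∈ Finset.range n, L i := by
    have hsub : Finset.range (l+1) ⊆ Finset.range n := by
      apply Finset.range_subset_range.mpr; omega
    have := Finset.sum_le_sum_of_subset_of_nonneg hsub
      (fun i hi _ => (hpos i (Finset.mem_range.mp hi)).le)
    rw [Finset.sum_range_succ] at this
    exact this
  have h2 : 4 * M * (S + M) / (S + ((n:ℝ) - l + 1) * M)^2 ≤
      4 * M * (∑ i ∈ Finset.range n, L i) / (S + ((n:ℝ) - l + 1) * M)^2 := by
    gcongr
  linarith
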